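/- In the averaging process of the previous lemma, if the vector z^(r) has at least one entry outside [-1/2,1/2], then z^(r+1) has strictly fewer entries outside [-1/2,1/2] than z^(r) does. -/
import Mathlib


/-- `i` is the first index achieving the minimum entry of `z`. -/
def isFirstMin {n : ℕ} (z : Fin n → ℝ) (i : Fin n) : Prop :=
  (∀ j, z i ≤ z j) ∧ ∀ j, (∀ k, z j ≤ z k) → i ≤ j

/-- `l` is the first index achieving the maximum entry of `z`. -/
def isFirstMax {n : ℕ} (z : Fin n → ℝ) (l : Fin n) : Prop :=
  (∀ j, z j ≤ z l) ∧ ∀ j, (∀ k, z k ≤ z j) → l ≤ j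

/-- One step of the averaging process: the first minimal entry and the first maximal
entry are both replaced by their mean, all other entries unchanged. -/
def avgStep {n : ℕ} (z z' : Fin n → ℝ) : Prop :=
  ∃ i l : Fin n, isFirstMin z i ∧ isFirstMax z l ∧
    z' i = (z i + z l) / 2 ∧ z' l = (z i + z l) / 2 ∧
    ∀ j, j ≠ i → j ≠ l → z' j = z j

theorem averaging_step_decreases {n : ℕ} (z z' : Fin n → ℝ)
    (h1 : ∀ j, z j ∈ Set.Icc (-1 : ℝ) 1)
    (h2 : ∑ j, z j = 0)
    (hstep : avgStep z z')
    (hout : ∃ j, ¬ (-(1/2) ≤ z j ∧ z j ≤ (1/2 : ℝ))) :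
    (Finset.univ.filter fun j => ¬ (-(1/2) ≤ z' j ∧ z' j ≤ (1/2 : ℝ))).card <
      (Finset.univ.filter fun j => ¬ (-(1/2) ≤ z j ∧ z j ≤ (1/2 : ℝ))).card := by
  obtain ⟨i, l, hmin, hmax, hi, hl, hother⟩ := hstep
  obtain ⟨j0, hj0⟩ := hout
  have hpos : 0 < n := Fin.pos j0
  -- z i ≤ 0
  have hlow : (Finset.univ.card : ℕ) • z i ≤ ∑ j, z j :=
    Finset.card_nsmul_le_sum _ _ _ (fun j _ => hmin.1 j)
  have hhigh : ∑ j, z j ≤ (Finset.univ.card : ℕ) • z l :=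
    Finset.sum_le_card_nsmul _ _ _ (fun j _ => hmax.1 j)
  rw [h2, Finset.card_univ, Fintype.card_fin, nsmul_eq_mul] at hlow hhigh
  have hn : (0:ℝ) < n := by exact_mod_cast hpos
  have hzi : z i ≤ 0 := by nlinarith
  have hzl : 0 ≤ z l := by nlinarith
  have hmean1 : -(1/2) ≤ (z i + z l) / 2 := by have := (h1 i).1; linarith
  have hmean2 : (z i + z l) / 2 ≤ 1/2 := by have := (h1 l).2; linarith
  apply Finset.card_lt_card
  constructor
  · intro j hj
    simp only [Finset.mem_filter, Finset.mem_univ, true_and] at hj ⊢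
    by_cases hji : j = i
    · subst hji; rw [hi] at hj; exact absurd ⟨hmean1, hmean2⟩ hj
    by_cases hjl : j = l
    · subst hjl; rw [hl] at hj; exact absurd ⟨hmean1, hmean2⟩ hj
    rwa [hother j hji hjl] at hj
  · intro hsub
    rcases not_and_or.mp hj0 with h | h
    · have hji : z i < -(1/2) := lt_of_le_of_lt (hmin.1 j0) (not_le.mp h)
      have hiold : i ∈ Finset.univ.filter fun j => ¬ (-(1/2) ≤ z j ∧ z j ≤ (1/2:ℝ)) := by
        simp only [Finset.mem_filter, Finset.mem_univ, true_and]
        intro hc; linarith [hc.1]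
      have := hsub hiold
      simp only [Finset.mem_filter, Finset.mem_univ, true_and, hi] at this
      exact this ⟨hmean1, hmean2⟩
    · have hjl : (1/2 : ℝ) < z l := lt_of_lt_of_le (not_le.mp h) (hmax.1 j0)
      have hlold : l ∈ Finset.univ.filter fun j => ¬ (-(1/2) ≤ z j ∧ z j ≤ (1/2:ℝ)) := by
        simp only [Finset.mem_filter, Finset.mem_univ, true_and]
        intro hc; linarith [hc.2]
      have := hsub hlold
      simp only [Finset.mem_filter, Finset.mem_univ, true_and, hl] at this
      exact this ⟨hmean1, hmean2⟩
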